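/- Let V be a complex Hilbert space, a, b ∈ V, and α, β ≥ 0 real numbers with α ≤ ‖a‖ and β ≤ ‖b‖. Define ã = (α/‖a‖)·a if a ≠ 0 and ã = 0 if a = 0, and define b̃ analogously from b and β. Then ‖ã − b̃‖² ≤ |α − β|² + ‖a − b‖². -/

import Mathlib

open scoped ComplexInnerProductSpace Classical

/-- For `a, b` in a complex Hilbert space `V` and `0 ≤ α ≤ ‖a‖`,
`0 ≤ β ≤ ‖b‖`, setting `ã = (α/‖a‖)·a` (and `ã = 0` for `a = 0`) and analogously `b̃`,
one has `‖ã − b̃‖² ≤ |α − β|² + ‖a − b‖²`. -/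
theorem stmt6 {V : Type*} [NormedAddCommGroup V] [InnerProductSpace ℂ V] [CompleteSpace V]
    (a b : V) (α β : ℝ) (hα0 : 0 ≤ α) (hβ0 : 0 ≤ β) (hα : α ≤ ‖a‖) (hβ : β ≤ ‖b‖) :
    ‖(if a = 0 then (0 : V) else ((α / ‖a‖ : ℝ) : ℂ) • a) -
        (if b = 0 then (0 : V) else ((β / ‖b‖ : ℝ) : ℂ) • b)‖ ^ 2 ≤
      |α - β| ^ 2 + ‖a - b‖ ^ 2 := by
  by_cases ha : a = 0
  · have hα' : α = 0 := le_antisymm (by simpa [ha] using hα) hα0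
    by_cases hb : b = 0
    · have hβ' : β = 0 := le_antisymm (by simpa [hb] using hβ) hβ0
      simp [ha, hb, hα', hβ']
    · have hB : (0:ℝ) < ‖b‖ := norm_pos_iff.mpr hb
      have : ‖(((β / ‖b‖ : ℝ)) : ℂ) • b‖ = β := by
        rw [norm_smul]
        simp [abs_div, abs_of_nonneg hβ0, hB.le, div_mul_cancel₀, hB.ne']
      simp only [ha, if_pos, if_neg hb, zero_sub, norm_neg, this, zero_sub, hα',
        zero_sub, abs_neg, abs_of_nonneg hβ0]
      nlinarith [sq_nonneg ‖(0:V) - b‖, norm_nonneg ((0:V) - b)]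
  · by_cases hb : b = 0
    · have hβ' : β = 0 := le_antisymm (by simpa [hb] using hβ) hβ0
      have hA : (0:ℝ) < ‖a‖ := norm_pos_iff.mpr ha
      have : ‖(((α / ‖a‖ : ℝ)) : ℂ) • a‖ = α := by
        rw [norm_smul]
        simp [abs_div, abs_of_nonneg hα0, hA.le, div_mul_cancel₀, hA.ne']
      simp only [hb, if_pos, if_neg ha, sub_zero, this, hβ', sub_zero, abs_of_nonneg hα0]
      nlinarith [sq_nonneg ‖a - (0:V)‖]
    · have hA : (0:ℝ) < ‖a‖ := norm_pos_iff.mpr ha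
      have hB : (0:ℝ) < ‖b‖ := norm_pos_iff.mpr hb
      simp only [if_neg ha, if_neg hb]
      set u : ℝ := α / ‖a‖ with hu
      set v : ℝ := β / ‖b‖ with hv
      have hu0 : 0 ≤ u := div_nonneg hα0 hA.le
      have hv0 : 0 ≤ v := div_nonneg hβ0 hB.le
      have hu1 : u ≤ 1 := (div_le_one hA).mpr hα
      have hv1 : v ≤ 1 := (div_le_one hB).mpr hβ
      have hαu : α = u * ‖a‖ := by rw [hu, div_mul_cancel₀ _ hA.ne']
      have hβv : β = v * ‖b‖ := by rw [hv, div_mul_cancel₀ _ hB.ne']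
      have e1 : ‖((u:ℂ)) • a - ((v:ℂ)) • b‖ ^ 2 =
          u^2 * ‖a‖^2 - 2 * (u * v * RCLike.re ⟪a, b⟫) + v^2 * ‖b‖^2 := by
        rw [@norm_sub_sq ℂ]
        rw [inner_smul_left, inner_smul_right, norm_smul, norm_smul]
        simp [Complex.norm_real, ← Complex.ofReal_mul, Complex.re_ofReal_mul,
          abs_of_nonneg hu0, abs_of_nonneg hv0, Complex.conj_ofReal]
        ring
      have e2 : ‖a - b‖ ^ 2 = ‖a‖^2 - 2 * RCLike.re ⟪a, b⟫ + ‖b‖^2 := by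
        rw [@norm_sub_sq ℂ]
      have ht : RCLike.re ⟪a, b⟫ ≤ ‖a‖ * ‖b‖ := re_inner_le_norm a b
      rw [e1, e2, sq_abs]
      nlinarith [mul_nonneg (sub_nonneg.mpr (mul_le_one₀ hu1 hv0 hv1))
          (sub_nonneg.mpr ht), sq_nonneg (‖a‖ - ‖b‖), mul_pos hA hB]
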